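/- For positive semidefinite Hermitian matrices ρ_u (u in a finite set U) with common average ρ̄ = E_u ρ_u, the average trace distance satisfies E_u ‖ρ_u - ρ̄‖₁ ≤ tr √(E_u ρ_u² - ρ̄²). -/

import Mathlib

open Finset
open scoped ComplexOrder

/-- The square root of a positive semidefinite matrix, as defined in the older Mathlib
(`Matrix.PosSemidef.sqrt`, since removed). -/
noncomputable def Matrix.PosSemidef.sqrt {𝕜 : Type*} [RCLike 𝕜] {n : Type*} [Fintype n]
    [DecidableEq n] {A : Matrix n n 𝕜} (hA : A.PosSemidef) : Matrix n n 𝕜 :=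
  hA.1.eigenvectorUnitary.1 * Matrix.diagonal ((↑) ∘ (√·) ∘ hA.1.eigenvalues) *
    (star hA.1.eigenvectorUnitary : Matrix n n 𝕜)

/-- The trace norm ‖A‖₁ = tr √(A†A). -/
noncomputable def traceNorm {n : Type*} [Fintype n] [DecidableEq n]
    (A : Matrix n n ℂ) : ℝ :=
  ((Matrix.posSemidef_conjTranspose_mul_self A).sqrt.trace).re

namespace TraceDistAux

open Matrix

variable {n : Type*} [Fintype n] [DecidableEq n] {V : Matrix n n ℂ}

lemma trace_re_nonneg {P : Matrix n n ℂ} (hP : P.PosSemidef) : 0 ≤ P.trace.re := by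
  have h : ∀ i, 0 ≤ (P i i).re := by
    intro i
    have h2 : 0 ≤ P i i := hP.diag_nonneg
    exact (Complex.le_def.mp h2).1
  simpa [Matrix.trace, Matrix.diag, Complex.re_sum] using Finset.sum_nonneg fun i _ => h i

lemma cs_lemma (X Y : Matrix n n ℂ) :
    ((Xᴴ * Y).trace).re ≤ (((Xᴴ * X).trace).re + ((Yᴴ * Y).trace).re) / 2 := by
  have h := trace_re_nonneg (Matrix.posSemidef_conjTranspose_mul_self (X - Y))
  have hexp : (X - Y)ᴴ * (X - Y) = Xᴴ * X - Xᴴ * Y - Yᴴ * X + Yᴴ * Y := by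
    rw [Matrix.conjTranspose_sub]
    noncomm_ring
  rw [hexp] at h
  have hyx : ((Yᴴ * X).trace).re = ((Xᴴ * Y).trace).re := by
    have e : (Yᴴ * X) = (Xᴴ * Y)ᴴ := by simp [Matrix.conjTranspose_mul]
    rw [e, Matrix.trace_conjTranspose]
    simp
  simp only [Matrix.trace_add, Matrix.trace_sub, Complex.add_re, Complex.sub_re] at h
  rw [hyx] at h
  linarith

noncomputable def ud (V : Matrix n n ℂ) (f : n → ℝ) : Matrix n n ℂ :=
  V * Matrix.diagonal (fun i => (f i : ℂ)) * star V

lemma ud_mul (h2 : star V * V = 1) (f g : n → ℝ) :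
    ud V f * ud V g = ud V (fun i => f i * g i) := by
  unfold ud
  have hd : (Matrix.diagonal (fun i => (f i : ℂ))) * (Matrix.diagonal (fun i => (g i : ℂ)))
      = Matrix.diagonal (fun i => ((f i * g i : ℝ) : ℂ)) := by
    rw [Matrix.diagonal_mul_diagonal]; push_cast; rfl
  calc V * Matrix.diagonal (fun i => (f i : ℂ)) * star V
        * (V * Matrix.diagonal (fun i => (g i : ℂ)) * star V)
      = V * (Matrix.diagonal (fun i => (f i : ℂ))
          * ((star V * V) * (Matrix.diagonal (fun i => (g i : ℂ)) * star V))) := by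
        simp only [Matrix.mul_assoc]
    _ = V * ((Matrix.diagonal (fun i => (f i : ℂ)) * Matrix.diagonal (fun i => (g i : ℂ)))
          * star V) := by
        rw [h2, Matrix.one_mul, Matrix.mul_assoc]
    _ = V * Matrix.diagonal (fun i => ((f i * g i : ℝ) : ℂ)) * star V := by
        rw [hd, Matrix.mul_assoc]

lemma ud_trace (h2 : star V * V = 1) (f : n → ℝ) : (ud V f).trace = ∑ i, (f i : ℂ) := by
  unfold ud
  rw [Matrix.trace_mul_cycle, h2, Matrix.one_mul, Matrix.trace_diagonal]

lemma ud_trace_re (h2 : star V * V = 1) (f : n → ℝ) : (ud V f).trace.re = ∑ i, f i := by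
  rw [ud_trace h2, Complex.re_sum]
  simp

lemma ud_herm (f : n → ℝ) : (ud V f).IsHermitian := by
  have hd : (Matrix.diagonal (fun i => (f i : ℂ))).IsHermitian := by
    rw [Matrix.IsHermitian, Matrix.diagonal_conjTranspose]
    simp [Pi.star_def, Complex.conj_ofReal]
  simpa [ud, Matrix.star_eq_conjTranspose] using
    Matrix.isHermitian_mul_mul_conjTranspose V hd

lemma ud_psd (f : n → ℝ) (hf : ∀ i, 0 ≤ f i) : (ud V f).PosSemidef := by
  have hd : (Matrix.diagonal (fun i => (f i : ℂ))).PosSemidef :=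
    Matrix.posSemidef_diagonal_iff.mpr fun i => by
      simpa using Complex.zero_le_real.mpr (hf i)
  simpa [ud, Matrix.star_eq_conjTranspose] using hd.mul_mul_conjTranspose_same V

lemma ud_one (h1 : V * star V = 1) : ud V (fun _ => 1) = 1 := by
  unfold ud
  simp only [Complex.ofReal_one, Matrix.diagonal_one, Matrix.mul_one]
  exact h1

lemma sqrt_eq_ud {A : Matrix n n ℂ} (hA : A.PosSemidef) :
    hA.sqrt = ud (hA.1.eigenvectorUnitary : Matrix n n ℂ) (fun i => Real.sqrt (hA.1.eigenvalues i)) :=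
  rfl

lemma sqrt_herm' {A : Matrix n n ℂ} (hA : A.PosSemidef) : hA.sqrt.IsHermitian := by
  rw [sqrt_eq_ud]; exact ud_herm _

lemma sqrt_mul_self' {A : Matrix n n ℂ} (hA : A.PosSemidef) : hA.sqrt * hA.sqrt = A := by
  rw [sqrt_eq_ud, ud_mul (Matrix.mem_unitaryGroup_iff'.mp hA.1.eigenvectorUnitary.2)]
  rw [show (fun i => Real.sqrt (hA.1.eigenvalues i) * Real.sqrt (hA.1.eigenvalues i))
      = hA.1.eigenvalues from funext fun i => Real.mul_self_sqrt (hA.eigenvalues_nonneg i)]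
  rw [ud]
  exact (hA.1.spectral_theorem).symm

/-- AM-GM/Cauchy-Schwarz step: tr T ≤ (tr S + tr (S⁻¹ T²))/2 with X = S^{1/2}. -/
lemma key_step {T X Xinv Sinv S : Matrix n n ℂ} (hT : T.IsHermitian) (hX : X.IsHermitian)
    (hXinv : Xinv.IsHermitian) (hXX : X * Xinv = 1) (hXi2 : Xinv * Xinv = Sinv)
    (hX2 : X * X = S) :
    T.trace.re ≤ (S.trace.re + (Sinv * (T * T)).trace.re) / 2 := by
  have h := cs_lemma X (Xinv * T)
  have e1 : Xᴴ * (Xinv * T) = T := by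
    rw [hX.eq, ← Matrix.mul_assoc, hXX, Matrix.one_mul]
  have e2 : Xᴴ * X = S := by rw [hX.eq, hX2]
  have e3 : ((Xinv * T)ᴴ * (Xinv * T)).trace = (Sinv * (T * T)).trace := by
    rw [Matrix.conjTranspose_mul, hT.eq, hXinv.eq]
    rw [show (T * Xinv) * (Xinv * T) = (T * (Xinv * Xinv)) * T by simp only [Matrix.mul_assoc]]
    rw [Matrix.trace_mul_comm, hXi2, ← Matrix.mul_assoc, Matrix.trace_mul_comm]
  rw [e1, e2, e3] at h
  exact h

lemma sqrt_add_le' (a b : ℝ) (ha : 0 ≤ a) (hb : 0 ≤ b) :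
    Real.sqrt (a + b) ≤ Real.sqrt a + Real.sqrt b := by
  have h := Real.sqrt_le_sqrt (show a + b ≤ (Real.sqrt a + Real.sqrt b) ^ 2 by
    nlinarith [Real.sq_sqrt ha, Real.sq_sqrt hb, Real.sqrt_nonneg a, Real.sqrt_nonneg b])
  rwa [Real.sqrt_sq (by positivity)] at h

end TraceDistAux

/-- E_u ‖ρ_u - ρ̄‖₁ ≤ tr √(E_u ρ_u² − ρ̄²). -/
theorem average_trace_distance_bound
    {U : Type*} [Fintype U] [Nonempty U] {n : Type*} [Fintype n] [DecidableEq n]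
    (ρ : U → Matrix n n ℂ) (hρ : ∀ u, (ρ u).PosSemidef)
    (ρbar : Matrix n n ℂ) (hbar : ρbar = ((Fintype.card U : ℂ))⁻¹ • ∑ u : U, ρ u)
    (hPSD : (((Fintype.card U : ℂ))⁻¹ • (∑ u : U, ρ u * ρ u) - ρbar * ρbar).PosSemidef) :
    ((Fintype.card U : ℝ))⁻¹ * ∑ u : U, traceNorm (ρ u - ρbar)
      ≤ (hPSD.sqrt.trace).re := by
  classical
  open TraceDistAux Matrix in
  set M : Matrix n n ℂ :=
    ((Fintype.card U : ℂ))⁻¹ • (∑ u : U, ρ u * ρ u) - ρbar * ρbar with hM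
  set cc : ℂ := (Fintype.card U : ℂ) with hcc
  have hcne : cc ≠ 0 := Nat.cast_ne_zero.mpr Fintype.card_ne_zero
  -- spectral data of M
  have hH : M.IsHermitian := hPSD.1
  set V : Matrix n n ℂ := (hH.eigenvectorUnitary : Matrix n n ℂ) with hV
  have h1 : V * star V = 1 := Matrix.mem_unitaryGroup_iff.mp hH.eigenvectorUnitary.2
  have h2 : star V * V = 1 := Matrix.mem_unitaryGroup_iff'.mp hH.eigenvectorUnitary.2
  set lam : n → ℝ := hH.eigenvalues with hlam
  have hlam0 : ∀ i, 0 ≤ lam i := hPSD.eigenvalues_nonneg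
  have hspec : ud V lam = M := by
    rw [ud]
    exact (hH.spectral_theorem).symm
  -- the RHS equals ∑ √(lam i)
  have hsqrtM : hPSD.sqrt = ud V (fun i => Real.sqrt (lam i)) := by
    exact sqrt_eq_ud hPSD
  have hRHS : (hPSD.sqrt.trace).re = ∑ i, Real.sqrt (lam i) := by
    rw [hsqrtM, ud_trace_re h2]
  -- Hermitian facts
  have hbarH : ρbar.IsHermitian := by
    rw [hbar, Matrix.IsHermitian, Matrix.conjTranspose_smul, Matrix.conjTranspose_sum]
    simp only [fun u => (hρ u).1.eq]
    congr 1
    rw [hcc]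
    simp
  have hAH : ∀ u, (ρ u - ρbar).IsHermitian := fun u => (hρ u).1.sub hbarH
  -- variance identity
  have hsum : ∑ u : U, ρ u = cc • ρbar := by
    rw [hbar, smul_smul, mul_inv_cancel₀ hcne, one_smul]
  have hvar : cc⁻¹ • ∑ u : U, ((ρ u - ρbar) * (ρ u - ρbar)) = M := by
    have expand : ∑ u : U, ((ρ u - ρbar) * (ρ u - ρbar))
        = (∑ u : U, ρ u * ρ u) - cc • (ρbar * ρbar) := by
      have e : ∀ u : U, (ρ u - ρbar) * (ρ u - ρbar)
          = ρ u * ρ u - ρ u * ρbar - ρbar * ρ u + ρbar * ρbar := fun u => by noncomm_ring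
      rw [Finset.sum_congr rfl fun u _ => e u]
      simp only [Finset.sum_add_distrib, Finset.sum_sub_distrib, ← Finset.sum_mul,
        ← Finset.mul_sum, hsum, Finset.sum_const, Finset.card_univ,
        smul_mul_assoc, mul_smul_comm, ← Nat.cast_smul_eq_nsmul ℂ, ← hcc]
      abel
    rw [expand, smul_sub, smul_smul, inv_mul_cancel₀ hcne, one_smul, hM]
  -- the ε-approximation
  have main : ∀ ε : ℝ, 0 < ε →
      ((Fintype.card U : ℝ))⁻¹ * ∑ u : U, traceNorm (ρ u - ρbar)
        ≤ ∑ i, Real.sqrt (lam i + ε) := by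
    intro ε hε
    have hpos : ∀ i, 0 < lam i + ε := fun i => add_pos_of_nonneg_of_pos (hlam0 i) hε
    have hqpos : ∀ i, 0 < Real.sqrt (Real.sqrt (lam i + ε)) := fun i =>
      Real.sqrt_pos.mpr (Real.sqrt_pos.mpr (hpos i))
    set S := ud V (fun i => Real.sqrt (lam i + ε)) with hS
    set X := ud V (fun i => Real.sqrt (Real.sqrt (lam i + ε))) with hX
    set Xinv := ud V (fun i => (Real.sqrt (Real.sqrt (lam i + ε)))⁻¹) with hXinv
    set Sinv := ud V (fun i => (Real.sqrt (lam i + ε))⁻¹) with hSinv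
    have hXX : X * Xinv = 1 := by
      rw [hX, hXinv, ud_mul h2,
        show (fun i => Real.sqrt (Real.sqrt (lam i + ε))
            * (Real.sqrt (Real.sqrt (lam i + ε)))⁻¹) = fun _ => (1 : ℝ) from
          funext fun i => mul_inv_cancel₀ (ne_of_gt (hqpos i)), ud_one h1]
    have hXi2 : Xinv * Xinv = Sinv := by
      rw [hXinv, hSinv, ud_mul h2,
        show (fun i => (Real.sqrt (Real.sqrt (lam i + ε)))⁻¹ * (Real.sqrt (Real.sqrt (lam i + ε)))⁻¹)
            = fun i => (Real.sqrt (lam i + ε))⁻¹ from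
          funext fun i => by rw [← mul_inv, Real.mul_self_sqrt (Real.sqrt_nonneg _)]]
    have hX2 : X * X = S := by
      rw [hX, hS, ud_mul h2,
        show (fun i => Real.sqrt (Real.sqrt (lam i + ε)) * Real.sqrt (Real.sqrt (lam i + ε)))
            = fun i => Real.sqrt (lam i + ε) from
          funext fun i => Real.mul_self_sqrt (Real.sqrt_nonneg _)]
    -- per-u inequality
    have per_u : ∀ u : U, traceNorm (ρ u - ρbar)
        ≤ (S.trace.re + (Sinv * ((ρ u - ρbar) * (ρ u - ρbar))).trace.re) / 2 := by
      intro u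
      have hTpsd := Matrix.posSemidef_conjTranspose_mul_self (ρ u - ρbar)
      have hT2 : hTpsd.sqrt * hTpsd.sqrt = (ρ u - ρbar) * (ρ u - ρbar) := by
        rw [sqrt_mul_self' hTpsd, (hAH u).eq]
      have h := key_step (sqrt_herm' hTpsd) (ud_herm _) (ud_herm _) hXX hXi2 hX2
      rw [hT2] at h
      exact h
    -- average it
    have havg : ((Fintype.card U : ℝ))⁻¹ * ∑ u : U, traceNorm (ρ u - ρbar)
        ≤ (S.trace.re + (Sinv * M).trace.re) / 2 := by
      have hsum_le : ∑ u : U, traceNorm (ρ u - ρbar)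
          ≤ ∑ u : U, (S.trace.re + (Sinv * ((ρ u - ρbar) * (ρ u - ρbar))).trace.re) / 2 :=
        Finset.sum_le_sum fun u _ => per_u u
      have hNpos : (0 : ℝ) < (Fintype.card U : ℝ) := by
        exact_mod_cast Fintype.card_pos
      have e1 : (Sinv * M).trace = cc⁻¹ * (Sinv * ∑ u : U, ((ρ u - ρbar) * (ρ u - ρbar))).trace := by
        rw [← hvar, Matrix.mul_smul, Matrix.trace_smul, smul_eq_mul]
      have e2 : (Sinv * ∑ u : U, ((ρ u - ρbar) * (ρ u - ρbar))).trace
          = ∑ u : U, (Sinv * ((ρ u - ρbar) * (ρ u - ρbar))).trace := by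
        rw [Finset.mul_sum, Matrix.trace_sum]
      have hNne : ((Fintype.card U : ℝ)) ≠ 0 := ne_of_gt hNpos
      have hcinv : cc⁻¹ = Complex.ofReal (((Fintype.card U : ℝ))⁻¹) := by
        rw [hcc, Complex.ofReal_inv, Complex.ofReal_natCast]
      have e3 : (Sinv * M).trace.re
          = ((Fintype.card U : ℝ))⁻¹ * ∑ u : U, (Sinv * ((ρ u - ρbar) * (ρ u - ρbar))).trace.re := by
        rw [e1, e2, hcinv, Complex.re_ofReal_mul, Complex.re_sum]
      calc ((Fintype.card U : ℝ))⁻¹ * ∑ u : U, traceNorm (ρ u - ρbar)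
          ≤ ((Fintype.card U : ℝ))⁻¹
            * ∑ u : U, (S.trace.re + (Sinv * ((ρ u - ρbar) * (ρ u - ρbar))).trace.re) / 2 := by
            exact mul_le_mul_of_nonneg_left hsum_le (by positivity)
        _ = (S.trace.re + (Sinv * M).trace.re) / 2 := by
            rw [e3, ← Finset.sum_div, Finset.sum_add_distrib, Finset.sum_const,
              Finset.card_univ, nsmul_eq_mul]
            field_simp
    -- bound tr(Sinv * M)
    have hSinvM : (Sinv * M).trace.re = ∑ i, (Real.sqrt (lam i + ε))⁻¹ * lam i := by
      rw [← hspec, hSinv, ud_mul h2, ud_trace_re h2]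
    have hbound : (Sinv * M).trace.re ≤ S.trace.re := by
      rw [hSinvM, hS, ud_trace_re h2]
      refine Finset.sum_le_sum fun i _ => ?_
      rw [inv_mul_le_iff₀ (Real.sqrt_pos.mpr (hpos i)), Real.mul_self_sqrt (le_of_lt (hpos i))]
      linarith
    calc ((Fintype.card U : ℝ))⁻¹ * ∑ u : U, traceNorm (ρ u - ρbar)
        ≤ (S.trace.re + (Sinv * M).trace.re) / 2 := havg
      _ ≤ (S.trace.re + S.trace.re) / 2 := by linarith
      _ = S.trace.re := by ring
      _ = ∑ i, Real.sqrt (lam i + ε) := by rw [hS, ud_trace_re h2]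
  -- take ε → 0
  rw [hRHS]
  refine le_of_forall_pos_le_add fun δ hδ => ?_
  set m : ℝ := (Fintype.card n : ℝ) with hm
  have hm0 : 0 ≤ m := by positivity
  have hε : (0 : ℝ) < (δ / (m + 1)) ^ 2 := by positivity
  refine (main _ hε).trans ?_
  have step : ∀ i, Real.sqrt (lam i + (δ / (m + 1)) ^ 2)
      ≤ Real.sqrt (lam i) + δ / (m + 1) := by
    intro i
    have := sqrt_add_le' (lam i) ((δ / (m + 1)) ^ 2) (hlam0 i) (le_of_lt hε)
    rwa [Real.sqrt_sq (by positivity)] at this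
  calc ∑ i, Real.sqrt (lam i + (δ / (m + 1)) ^ 2)
      ≤ ∑ i, (Real.sqrt (lam i) + δ / (m + 1)) := Finset.sum_le_sum fun i _ => step i
    _ = (∑ i, Real.sqrt (lam i)) + m * (δ / (m + 1)) := by
        rw [Finset.sum_add_distrib, Finset.sum_const, Finset.card_univ, nsmul_eq_mul, hm]
    _ ≤ (∑ i, Real.sqrt (lam i)) + δ := by
        have : m * (δ / (m + 1)) ≤ δ := by
          rw [mul_div_assoc']
          rw [div_le_iff₀ (by linarith)]
          nlinarith
        linarith
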